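/- Let (Y,ρ) be a metric space, u : [0,1] → Y a map, and g ∈ L¹(0,1) a nonnegative function such that ρ(u_t,u_s)² ≤ (s−t) ∫_t^s g(r) dr for all 0 ≤ t < s ≤ 1. Then u is a 2-absolutely continuous curve and its metric speed satisfies |u̇_t|² ≤ g(t) for a.e. t ∈ [0,1]. -/

import Mathlib

open Filter MeasureTheory Set Topology
open scoped ENNReal NNReal Classical

lemma sq_le_am {d x y : ℝ} (hd : 0 ≤ d) (hx : 0 ≤ x) (hy : 0 ≤ y) (h : d^2 ≤ x*y) :
    d ≤ (x+y)/2 := by nlinarith [sq_nonneg (x - y), sq_nonneg (d - (x+y)/2)]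

lemma mono_deriv_nonneg {F : ℝ → ℝ} (hF : Monotone F) (t : ℝ) : 0 ≤ deriv F t := by
  by_cases hd : DifferentiableAt ℝ F t
  · have h := hasDerivAt_iff_tendsto_slope.1 hd.hasDerivAt
    have h' : Tendsto (slope F t) (𝓝[>] t) (𝓝 (deriv F t)) :=
      h.mono_left (nhdsWithin_mono _ (fun s hs => ne_of_gt hs))
    refine ge_of_tendsto h' ?_
    filter_upwards [self_mem_nhdsWithin] with s hs
    have : (0:ℝ) < s - t := by simpa using sub_pos.2 (show t < s from hs)
    rw [slope_def_field]
    exact div_nonneg (sub_nonneg.2 (hF (le_of_lt hs))) this.le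
  · simp [deriv_zero_of_not_differentiableAt hd]

lemma monotone_lintegral_deriv_le {F : ℝ → ℝ} (hF : Monotone F) (hFc : Continuous F)
    (a b : ℝ) :
    ∫⁻ x in Set.Ioc a b, ENNReal.ofReal (deriv F x) ≤ ENNReal.ofReal (F b - F a) := by
  have h1 := hF.ae_hasDerivAt
  have h2 : ∀ᵐ x, Measure.rnDeriv hF.stieltjesFunction.measure volume x < ∞ :=
    Measure.rnDeriv_lt_top _ _
  have hae : ∀ᵐ x, ENNReal.ofReal (deriv F x)
      = Measure.rnDeriv hF.stieltjesFunction.measure volume x := by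
    filter_upwards [h1, h2] with x hx h'x
    rw [hx.deriv, ENNReal.ofReal_toReal h'x.ne]
  have hSF : ∀ x, hF.stieltjesFunction x = F x := by
    intro x
    rw [hF.stieltjesFunction_eq]
    exact rightLim_eq_of_tendsto
      ((hFc.tendsto x).mono_left nhdsWithin_le_nhds)
  calc ∫⁻ x in Set.Ioc a b, ENNReal.ofReal (deriv F x)
      = ∫⁻ x in Set.Ioc a b, Measure.rnDeriv hF.stieltjesFunction.measure volume x :=
        lintegral_congr_ae (ae_restrict_of_ae hae)
    _ ≤ hF.stieltjesFunction.measure (Set.Ioc a b) := Measure.setLIntegral_rnDeriv_le _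
    _ = ENNReal.ofReal (F b - F a) := by rw [StieltjesFunction.measure_Ioc, hSF, hSF]

lemma monotone_deriv_integrableOn {F : ℝ → ℝ} (hF : Monotone F) (hFc : Continuous F)
    (a b : ℝ) : IntegrableOn (deriv F) (Set.Ioc a b) volume := by
  refine ⟨(measurable_deriv F).aestronglyMeasurable, ?_⟩
  rw [hasFiniteIntegral_iff_norm]
  have : ∀ x, ENNReal.ofReal ‖deriv F x‖ = ENNReal.ofReal (deriv F x) := fun x => by
    rw [Real.norm_eq_abs, abs_of_nonneg (mono_deriv_nonneg hF x)]
  simp_rw [this]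
  exact lt_of_le_of_lt (monotone_lintegral_deriv_le hF hFc a b) ENNReal.ofReal_lt_top

lemma monotone_integral_deriv_le {F : ℝ → ℝ} (hF : Monotone F) (hFc : Continuous F)
    {a b : ℝ} (hab : a ≤ b) : ∫ x in a..b, deriv F x ≤ F b - F a := by
  rw [intervalIntegral.integral_of_le hab,
    integral_eq_lintegral_of_nonneg_ae (ae_of_all _ (mono_deriv_nonneg hF))
      (measurable_deriv F).aestronglyMeasurable]
  have h := monotone_lintegral_deriv_le hF hFc a b
  calc (∫⁻ x in Set.Ioc a b, ENNReal.ofReal (deriv F x)).toReal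
      ≤ (ENNReal.ofReal (F b - F a)).toReal := ENNReal.toReal_mono ENNReal.ofReal_ne_top h
    _ ≤ F b - F a := by rw [ENNReal.toReal_ofReal']; exact max_le le_rfl (sub_nonneg.2 (hF hab))

lemma lebesgue_pt {h : ℝ → ℝ} (hh : MeasureTheory.Integrable h volume) :
    ∀ᵐ t, Tendsto (fun s => (∫ r in t..s, h r) / (s - t)) (𝓝[≠] t) (𝓝 (h t)) := by
  filter_upwards [(IsUnifLocDoublingMeasure.vitaliFamily (volume : Measure ℝ)
    1).ae_tendsto_average_norm_sub hh.locallyIntegrable] with t ht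
  rw [← nhdsLT_sup_nhdsGT t, tendsto_sup]
  constructor
  · -- left
    have hL := ht.comp (Real.tendsto_Icc_vitaliFamily_left t)
    rw [← tendsto_sub_nhds_zero_iff]
    apply squeeze_zero_norm' _ hL
    filter_upwards [self_mem_nhdsWithin] with s hs
    have hst : s < t := hs
    have hts : (0:ℝ) < t - s := by linarith
    have e1 : (∫ r in t..s, h r) / (s - t) - h t
        = (∫ r in s..t, (h r - h t)) / (t - s) := by
      have ha : (∫ r in t..s, h r) / (s - t) = (∫ r in s..t, h r) / (t - s) := by
        rw [intervalIntegral.integral_symm s t, neg_div, ← div_neg, neg_sub]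
      have hb : (∫ r in s..t, (h r - h t)) / (t - s)
          = (∫ r in s..t, h r) / (t - s) - h t := by
        rw [intervalIntegral.integral_sub hh.intervalIntegrable intervalIntegrable_const,
          intervalIntegral.integral_const, smul_eq_mul, sub_div,
          mul_div_cancel_left₀ _ hts.ne']
      rw [ha, hb]
    rw [e1]
    simp only [Function.comp_apply]
    have e2 : ⨍ y in Icc s t, ‖h y - h t‖ = (t - s)⁻¹ * ∫ y in Icc s t, ‖h y - h t‖ := by
      rw [setAverage_eq, measureReal_def, Real.volume_Icc, ENNReal.toReal_ofReal hts.le, smul_eq_mul]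
    rw [e2, Real.norm_eq_abs, abs_div, abs_of_pos hts, div_eq_inv_mul]
    apply mul_le_mul_of_nonneg_left _ (inv_nonneg.2 hts.le)
    calc |∫ r in s..t, (h r - h t)| ≤ ∫ y in Set.Ioc s t, ‖h y - h t‖ := by
          simpa [Real.norm_eq_abs, Set.uIoc_of_le hst.le] using
            intervalIntegral.norm_integral_le_integral_norm_uIoc (f := fun r => h r - h t)
              (μ := volume) (a := s) (b := t)
      _ = ∫ y in Set.Icc s t, ‖h y - h t‖ := (integral_Icc_eq_integral_Ioc).symm
  · -- right
    have hR := ht.comp (Real.tendsto_Icc_vitaliFamily_right t)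
    rw [← tendsto_sub_nhds_zero_iff]
    apply squeeze_zero_norm' _ hR
    filter_upwards [self_mem_nhdsWithin] with s hs
    have hst : t < s := hs
    have hts : (0:ℝ) < s - t := by linarith
    have e1 : (∫ r in t..s, h r) / (s - t) - h t
        = (∫ r in t..s, (h r - h t)) / (s - t) := by
      rw [intervalIntegral.integral_sub hh.intervalIntegrable intervalIntegrable_const,
        intervalIntegral.integral_const, smul_eq_mul, sub_div,
        mul_div_cancel_left₀ _ hts.ne']
    rw [e1]
    simp only [Function.comp_apply]
    have e2 : ⨍ y in Icc t s, ‖h y - h t‖ = (s - t)⁻¹ * ∫ y in Icc t s, ‖h y - h t‖ := by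
      rw [setAverage_eq, measureReal_def, Real.volume_Icc, ENNReal.toReal_ofReal hts.le, smul_eq_mul]
    rw [e2, Real.norm_eq_abs, abs_div, abs_of_pos hts, div_eq_inv_mul]
    apply mul_le_mul_of_nonneg_left _ (inv_nonneg.2 hts.le)
    calc |∫ r in t..s, (h r - h t)| ≤ ∫ y in Set.Ioc t s, ‖h y - h t‖ := by
          simpa [Real.norm_eq_abs, Set.uIoc_of_le hst.le] using
            intervalIntegral.norm_integral_le_integral_norm_uIoc (f := fun r => h r - h t)
              (μ := volume) (a := t) (b := s)
      _ = ∫ y in Set.Icc t s, ‖h y - h t‖ := (integral_Icc_eq_integral_Ioc).symm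

/-- The metric speed of a curve `u` at time `t`: the limit of `d(u s, u t)/|s - t|` as `s → t`,
if it exists (and `0` otherwise). -/
noncomputable def metricSpeed {Y : Type*} [MetricSpace Y] (u : ℝ → Y) (t : ℝ) : ℝ :=
  if h : ∃ L : ℝ, Tendsto (fun s => dist (u s) (u t) / |s - t|) (𝓝[≠] t) (𝓝 L) then h.choose
  else 0

/-- `u : [0,1] → Y` is 2-absolutely continuous: there is `f ∈ L²(0,1)` with
`d(u_t, u_s) ≤ ∫_t^s f` for all `0 ≤ t ≤ s ≤ 1`. -/
def IsAC2 {Y : Type*} [MetricSpace Y] (u : ℝ → Y) : Prop :=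
  ∃ f : ℝ → ℝ, (∀ t, 0 ≤ f t) ∧ IntegrableOn f (Set.Icc 0 1) ∧
    IntegrableOn (fun t => f t ^ 2) (Set.Icc 0 1) ∧
    ∀ t s : ℝ, 0 ≤ t → t ≤ s → s ≤ 1 → dist (u t) (u s) ≤ ∫ r in t..s, f r

/-- If `u : [0,1] → Y` and `g ∈ L¹(0,1)` is nonnegative with
`d(u_t,u_s)² ≤ (s-t) ∫_t^s g` for all `0 ≤ t ≤ s ≤ 1`, then `u` is 2-absolutely continuous and
its metric speed exists a.e. and satisfies `|u̇_t|² ≤ g t` for a.e. `t ∈ [0,1]`. -/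
theorem stmt16 {Y : Type*} [MetricSpace Y] (u : ℝ → Y) (g : ℝ → ℝ)
    (hg0 : ∀ t, 0 ≤ g t) (hgint : IntegrableOn g (Set.Icc 0 1))
    (hbound : ∀ t s : ℝ, 0 ≤ t → t ≤ s → s ≤ 1 →
      dist (u t) (u s) ^ 2 ≤ (s - t) * ∫ r in t..s, g r) :
    IsAC2 u ∧
      ∀ᵐ t ∂(MeasureTheory.volume.restrict (Set.Ioo (0:ℝ) 1)),
        (∃ L : ℝ, Tendsto (fun s => dist (u s) (u t) / |s - t|) (𝓝[≠] t) (𝓝 L)) ∧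
        metricSpeed u t ^ 2 ≤ g t := by
  classical
  -- clamping
  set c : ℝ → ℝ := fun t => max 0 (min 1 t) with hcdef
  have hc01 : ∀ t, c t ∈ Set.Icc (0:ℝ) 1 :=
    fun t => ⟨le_max_left _ _, max_le zero_le_one (min_le_left _ _)⟩
  have hcid : ∀ t ∈ Set.Icc (0:ℝ) 1, c t = t := by
    intro t ht
    simp only [hcdef]
    rw [min_eq_right ht.2, max_eq_right ht.1]
  have hcmono : Monotone c := fun a b hab => max_le_max le_rfl (min_le_min le_rfl hab)
  set v : ℝ → Y := fun t => u (c t) with hvdef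
  -- the L¹ control function
  set f₀ : ℝ → ℝ := (Set.Ioc (0:ℝ) 1).indicator (fun r => (1 + g r)/2) with hf₀def
  set gI : ℝ → ℝ := (Set.Ioc (0:ℝ) 1).indicator g with hgIdef
  have hgIoc : IntegrableOn g (Set.Ioc 0 1) := hgint.mono_set Set.Ioc_subset_Icc_self
  have hgI : MeasureTheory.Integrable gI volume :=
    (integrable_indicator_iff measurableSet_Ioc).2 hgIoc
  have hf₀on : IntegrableOn (fun r => (1 + g r)/2) (Set.Ioc 0 1) :=
    ((integrableOn_const (by simp) (by simp)).add hgIoc).div_const 2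
  have hf₀ : MeasureTheory.Integrable f₀ volume :=
    (integrable_indicator_iff measurableSet_Ioc).2 hf₀on
  have hf₀0 : ∀ r, 0 ≤ f₀ r := by
    intro r
    apply Set.indicator_nonneg
    intro x _
    have := hg0 x
    linarith
  set G₀ : ℝ → ℝ := fun t => ∫ r in (0:ℝ)..t, f₀ r with hG₀def
  have hG₀ : ∀ t s : ℝ, G₀ s - G₀ t = ∫ r in t..s, f₀ r := by
    intro t s
    have := intervalIntegral.integral_add_adjacent_intervals
      (a := (0:ℝ)) (b := t) (c := s) hf₀.intervalIntegrable hf₀.intervalIntegrable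
    simp only [hG₀def]
    linarith
  have hG₀m : Monotone G₀ := by
    intro t s hts
    have h1 := hG₀ t s
    have h2 : 0 ≤ ∫ r in t..s, f₀ r :=
      intervalIntegral.integral_nonneg hts fun r _ => hf₀0 r
    linarith
  have hG₀c : Continuous G₀ := by
    apply intervalIntegral.continuous_primitive
    exact fun a b => hf₀.intervalIntegrable
  -- main inequality on [0,1]
  have hgiab : ∀ a b : ℝ, a ≤ b → IntervalIntegrable g volume a b ∨ True := fun _ _ _ => Or.inr trivial
  have hkey1 : ∀ a b : ℝ, 0 ≤ a → a ≤ b → b ≤ 1 → dist (u a) (u b) ≤ G₀ b - G₀ a := by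
    intro a b ha hab hb1
    have hsub : Set.Ioc a b ⊆ Set.Ioc (0:ℝ) 1 :=
      Set.Ioc_subset_Ioc ha hb1
    have hgab : IntervalIntegrable g volume a b := by
      rw [intervalIntegrable_iff, Set.uIoc_of_le hab]
      exact hgIoc.mono_set hsub
    have h2 := hbound a b ha hab hb1
    have hgnn : 0 ≤ ∫ r in a..b, g r :=
      intervalIntegral.integral_nonneg hab fun r _ => hg0 r
    have hfg : ∫ r in a..b, f₀ r = ∫ r in a..b, (1 + g r)/2 := by
      rw [intervalIntegral.integral_of_le hab, intervalIntegral.integral_of_le hab]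
      apply setIntegral_congr_fun measurableSet_Ioc
      intro r hr
      simp only [hf₀def]
      rw [Set.indicator_of_mem (hsub hr)]
    have hint : ∫ r in a..b, (1 + g r)/2 = ((b - a) + ∫ r in a..b, g r)/2 := by
      rw [intervalIntegral.integral_div,
        intervalIntegral.integral_add intervalIntegrable_const hgab,
        intervalIntegral.integral_const, smul_eq_mul, mul_one]
    have hAM := sq_le_am dist_nonneg (sub_nonneg.2 hab) hgnn h2
    rw [hG₀ a b, hfg, hint]
    linarith
  have hGc : ∀ t, G₀ (c t) = G₀ t := by
    intro t
    rcases le_or_gt t 0 with h | h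
    · have hct : c t = 0 := by
        simp only [hcdef]
        rw [min_eq_right (h.trans zero_le_one), max_eq_left h]
      have hz : ∫ r in t..(0:ℝ), f₀ r = 0 := by
        rw [intervalIntegral.integral_of_le h]
        rw [setIntegral_congr_fun measurableSet_Ioc (g := fun _ => (0:ℝ))]
        · simp
        · intro r hr
          simp only [hf₀def]
          rw [Set.indicator_of_notMem]
          intro hmem
          exact absurd (hmem.1.trans_le hr.2) (lt_irrefl 0)
      have := hG₀ t 0
      rw [hct]
      linarith
    · rcases le_or_gt t 1 with h1 | h1
      · rw [hcid t ⟨h.le, h1⟩]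
      · have hct : c t = 1 := by
          simp only [hcdef]
          rw [min_eq_left h1.le]
          exact max_eq_right zero_le_one
        have hz : ∫ r in (1:ℝ)..t, f₀ r = 0 := by
          rw [intervalIntegral.integral_of_le h1.le]
          rw [setIntegral_congr_fun measurableSet_Ioc (g := fun _ => (0:ℝ))]
          · simp
          · intro r hr
            simp only [hf₀def]
            rw [Set.indicator_of_notMem]
            intro hmem
            exact absurd (hr.1.trans_le hmem.2) (lt_irrefl 1)
        have := hG₀ 1 t
        rw [hct]
        linarith
  have hkey0 : ∀ t s : ℝ, t ≤ s → dist (v t) (v s) ≤ G₀ s - G₀ t := by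
    intro t s hts
    have h1 : dist (u (c t)) (u (c s)) ≤ G₀ (c s) - G₀ (c t) :=
      hkey1 _ _ (hc01 t).1 (hcmono hts) (hc01 s).2
    rw [hGc, hGc] at h1
    exact h1
  have hvc : Continuous v := by
    rw [continuous_iff_continuousAt]
    intro t
    rw [ContinuousAt, tendsto_iff_dist_tendsto_zero]
    have hb : ∀ s, dist (v s) (v t) ≤ |G₀ s - G₀ t| := by
      intro s
      rcases le_total s t with h | h
      · exact (hkey0 s t h).trans ((neg_le_abs _).trans_eq' (by ring_nf))
      · rw [dist_comm]
        exact (hkey0 t s h).trans (le_abs_self _)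
    have hG : Tendsto (fun s => |G₀ s - G₀ t|) (𝓝 t) (𝓝 0) := by
      have := ((hG₀c.tendsto t).sub_const (G₀ t)).abs
      simpa using this
    exact squeeze_zero (fun s => dist_nonneg) hb hG
  -- distance functions
  set φ : ℚ → ℝ → ℝ := fun q t => dist (v t) (v (q:ℝ)) with hφdef
  have hψm : ∀ q : ℚ, Monotone (fun t => φ q t + G₀ t) := by
    intro q a b hab
    simp only [hφdef]
    have h1 := abs_dist_sub_le (v a) (v b) (v (q:ℝ))
    have h2 := hkey0 a b hab
    have h3 := (abs_le.1 h1).2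
    linarith
  have hθm : ∀ q : ℚ, Monotone (fun t => G₀ t - φ q t) := by
    intro q a b hab
    simp only [hφdef]
    have h1 := abs_dist_sub_le (v b) (v a) (v (q:ℝ))
    have h2 : dist (v b) (v a) ≤ G₀ b - G₀ a := by
      rw [dist_comm]; exact hkey0 a b hab
    have h3 := (abs_le.1 h1).2
    linarith
  have hφc : ∀ q : ℚ, Continuous (φ q) := fun q => hvc.dist continuous_const
  -- the candidate metric speed
  set m : ℝ → ℝ := fun t => (⨆ q : ℚ, (‖deriv (φ q) t‖₊ : ℝ≥0∞)).toReal with hmdef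
  have hm_meas : Measurable m := by
    apply Measurable.ennreal_toReal
    exact Measurable.iSup fun q => (measurable_deriv (φ q)).enorm
  have hm0 : ∀ t, 0 ≤ m t := fun t => ENNReal.toReal_nonneg
  -- a.e. differentiability package
  have hae1 : ∀ᵐ t, HasDerivAt G₀ (f₀ t) t := by
    filter_upwards [lebesgue_pt hf₀] with t ht
    rw [hasDerivAt_iff_tendsto_slope]
    exact ht.congr fun s => by rw [slope_def_field, hG₀ t s]
  have hP : ∀ᵐ t, (∀ q, DifferentiableAt ℝ (φ q) t) ∧ HasDerivAt G₀ (f₀ t) t ∧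
      (∀ q, |deriv (φ q) t| ≤ f₀ t) := by
    filter_upwards [hae1, ae_all_iff.2 fun q : ℚ => (hψm q).ae_differentiableAt] with t h1 h2
    have hdiff : ∀ q, DifferentiableAt ℝ (φ q) t := by
      intro q
      have := (h2 q).sub h1.differentiableAt
      rwa [show φ q = (fun t => φ q t + G₀ t) - G₀ by funext x; simp]
    refine ⟨hdiff, h1, fun q => ?_⟩
    have hψd : deriv (fun x => φ q x + G₀ x) t = deriv (φ q) t + f₀ t := by
      rw [deriv_fun_add (hdiff q) h1.differentiableAt, h1.deriv]
    have hθd : deriv (fun x => G₀ x - φ q x) t = f₀ t - deriv (φ q) t := by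
      rw [deriv_fun_sub h1.differentiableAt (hdiff q), h1.deriv]
    have a1 := mono_deriv_nonneg (hψm q) t
    rw [hψd] at a1
    have a2 := mono_deriv_nonneg (hθm q) t
    rw [hθd] at a2
    rw [abs_le]
    constructor <;> linarith
  have hmP : ∀ᵐ t, (∀ q, |deriv (φ q) t| ≤ m t) ∧ m t ≤ f₀ t ∧
      (⨆ q : ℚ, (‖deriv (φ q) t‖₊ : ℝ≥0∞)) ≠ ∞ := by
    filter_upwards [hP] with t ht
    obtain ⟨h1, h2, h3⟩ := ht
    have hS : (⨆ q : ℚ, (‖deriv (φ q) t‖₊ : ℝ≥0∞)) ≤ ENNReal.ofReal (f₀ t) := by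
      refine iSup_le fun q => ?_
      rw [← enorm_eq_nnnorm, ← ofReal_norm]
      exact ENNReal.ofReal_le_ofReal (by simpa [Real.norm_eq_abs] using h3 q)
    have hfin : (⨆ q : ℚ, (‖deriv (φ q) t‖₊ : ℝ≥0∞)) ≠ ∞ :=
      (lt_of_le_of_lt hS ENNReal.ofReal_lt_top).ne
    refine ⟨fun q => ?_, ?_, hfin⟩
    · have hle : (‖deriv (φ q) t‖₊ : ℝ≥0∞) ≤ ⨆ q : ℚ, (‖deriv (φ q) t‖₊ : ℝ≥0∞) :=
        le_iSup (fun q : ℚ => (‖deriv (φ q) t‖₊ : ℝ≥0∞)) q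
      have := ENNReal.toReal_mono hfin hle
      simpa [hmdef, Real.norm_eq_abs] using this
    · have := ENNReal.toReal_mono ENNReal.ofReal_ne_top hS
      rw [ENNReal.toReal_ofReal (hf₀0 t)] at this
      exact this
  have hm_int : MeasureTheory.Integrable m volume := by
    refine hf₀.mono hm_meas.aestronglyMeasurable ?_
    filter_upwards [hmP] with t ht
    rw [Real.norm_eq_abs, Real.norm_eq_abs, abs_of_nonneg (hm0 t), abs_of_nonneg (hf₀0 t)]
    exact ht.2.1
  have hφint : ∀ q : ℚ, MeasureTheory.Integrable (deriv (φ q)) volume := by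
    intro q
    refine hm_int.mono (measurable_deriv (φ q)).aestronglyMeasurable ?_
    filter_upwards [hmP] with t ht
    rw [Real.norm_eq_abs, Real.norm_eq_abs, abs_of_nonneg (hm0 t)]
    exact ht.1 q
  -- increments of φ are controlled by the integral of m
  have hφinc : ∀ (q : ℚ) (t s : ℝ), t ≤ s → φ q s - φ q t ≤ ∫ r in t..s, m r := by
    intro q t s hts
    have hθc : Continuous (fun x => G₀ x - φ q x) := hG₀c.sub (hφc q)
    have hMI := monotone_integral_deriv_le (hθm q) hθc hts
    have hcongr : ∀ᵐ x ∂(volume : Measure ℝ),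
        deriv (fun x => G₀ x - φ q x) x = f₀ x - deriv (φ q) x := by
      filter_upwards [hP] with x hx
      rw [deriv_fun_sub hx.2.1.differentiableAt (hx.1 q), hx.2.1.deriv]
    have hint1 : ∫ x in t..s, deriv (fun x => G₀ x - φ q x) x
        = ∫ x in t..s, (f₀ x - deriv (φ q) x) :=
      intervalIntegral.integral_congr_ae (hcongr.mono fun x hx _ => hx)
    have hint2 : ∫ x in t..s, (f₀ x - deriv (φ q) x)
        = (∫ x in t..s, f₀ x) - ∫ x in t..s, deriv (φ q) x :=
      intervalIntegral.integral_sub hf₀.intervalIntegrable (hφint q).intervalIntegrable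
    have hint3 : ∫ x in t..s, deriv (φ q) x ≤ ∫ x in t..s, m x := by
      apply intervalIntegral.integral_mono_ae hts (hφint q).intervalIntegrable
        hm_int.intervalIntegrable
      filter_upwards [hmP] with x hx
      exact (le_abs_self _).trans (hx.1 q)
    have hG := hG₀ t s
    rw [hint1, hint2] at hMI
    linarith
  -- distance increments are controlled by the integral of m
  have hdm : ∀ t s : ℝ, t ≤ s → dist (v t) (v s) ≤ ∫ r in t..s, m r := by
    intro t s hts
    apply le_of_forall_pos_le_add
    intro ε hε
    obtain ⟨δ, hδ, hball⟩ := Metric.continuous_iff.1 hvc t (ε/2) (by linarith)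
    obtain ⟨q, hq1, hq2⟩ := exists_rat_btwn (sub_lt_self t hδ)
    have h1 : dist (v (q:ℝ)) (v t) < ε/2 := by
      apply hball
      rw [Real.dist_eq, abs_lt]
      constructor <;> linarith
    have h2 := hφinc q t s hts
    simp only [hφdef] at h2
    have h3 := dist_triangle (v t) (v (q:ℝ)) (v s)
    have h4 : dist (v (q:ℝ)) (v s) = dist (v s) (v (q:ℝ)) := dist_comm _ _
    have h5 : dist (v t) (v (q:ℝ)) = dist (v (q:ℝ)) (v t) := dist_comm _ _
    linarith
  -- the main pointwise statement
  have final : ∀ᵐ t ∂(volume : Measure ℝ), t ∈ Set.Ioo (0:ℝ) 1 →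
      (∃ L : ℝ, Tendsto (fun s => dist (u s) (u t) / |s - t|) (𝓝[≠] t) (𝓝 L)) ∧
        metricSpeed u t ^ 2 ≤ g t ∧ m t ^ 2 ≤ g t := by
    filter_upwards [hmP, hP, lebesgue_pt hm_int, lebesgue_pt hgI] with t hmp hp h3 h4 hto
    obtain ⟨ht0, ht1⟩ := hto
    have hct : c t = t := hcid t ⟨ht0.le, ht1.le⟩
    have hut : u t = v t := by rw [hvdef]; simp only; rw [hct]
    have hev : ∀ᶠ s in 𝓝[≠] t, s ∈ Set.Ioo (0:ℝ) 1 ∧ s ≠ t := by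
      have hIoo : ∀ᶠ s in 𝓝 t, s ∈ Set.Ioo (0:ℝ) 1 := Ioo_mem_nhds ht0 ht1
      filter_upwards [eventually_nhdsWithin_of_eventually_nhds hIoo, self_mem_nhdsWithin]
        with s h1 h2
      exact ⟨h1, h2⟩
    have hus : ∀ s : ℝ, s ∈ Set.Ioo (0:ℝ) 1 → u s = v s := by
      intro s hs
      rw [hvdef]; simp only; rw [hcid s ⟨hs.1.le, hs.2.le⟩]
    have hub : ∀ᶠ s in 𝓝[≠] t, dist (u s) (u t) / |s - t| ≤ (∫ r in t..s, m r) / (s - t) := by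
      filter_upwards [hev] with s hs
      obtain ⟨hsI, hsne⟩ := hs
      rw [hus s hsI, hut]
      rcases lt_or_gt_of_ne hsne with h | h
      · have habs : |s - t| = t - s := by rw [abs_of_neg (by linarith)]; ring
        have hint : (∫ r in t..s, m r) / (s - t) = (∫ r in s..t, m r) / (t - s) := by
          rw [intervalIntegral.integral_symm s t, neg_div, ← div_neg, neg_sub]
        rw [habs, hint]
        have := hdm s t h.le
        gcongr
      · have habs : |s - t| = s - t := abs_of_pos (by linarith)
        rw [habs, dist_comm]
        have := hdm t s h.le
        gcongr
    have hTm : Tendsto (fun s => dist (u s) (u t) / |s - t|) (𝓝[≠] t) (𝓝 (m t)) := by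
      rw [Metric.tendsto_nhds]
      intro ε hε
      have e1 : ∀ᶠ s in 𝓝[≠] t, (∫ r in t..s, m r) / (s - t) < m t + ε :=
        h3.eventually (gt_mem_nhds (by linarith))
      have e2 : ∀ᶠ s in 𝓝[≠] t, m t - ε/2 ≤ dist (u s) (u t) / |s - t| := by
        rcases le_or_gt (m t) (ε/2) with hc | hc
        · filter_upwards with s
          have : (0:ℝ) ≤ dist (u s) (u t) / |s - t| := div_nonneg dist_nonneg (abs_nonneg _)
          linarith
        · -- find a good rational index
          have hmeq : m t = (⨆ q : ℚ, (‖deriv (φ q) t‖₊ : ℝ≥0∞)).toReal := by rw [hmdef]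
          have hmul : ENNReal.ofReal (m t - ε/2) < ⨆ q : ℚ, (‖deriv (φ q) t‖₊ : ℝ≥0∞) :=
            calc ENNReal.ofReal (m t - ε/2) < ENNReal.ofReal (m t) :=
                  (ENNReal.ofReal_lt_ofReal_iff (by linarith)).2 (by linarith)
              _ = _ := by rw [hmeq, ENNReal.ofReal_toReal hmp.2.2]
          obtain ⟨q, hq⟩ := lt_iSup_iff.1 hmul
          have hqlt : m t - ε/2 < |deriv (φ q) t| := by
            rw [← enorm_eq_nnnorm, ← ofReal_norm] at hq
            have := (ENNReal.ofReal_lt_ofReal_iff_of_nonneg (by linarith)).1 hq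
            rwa [Real.norm_eq_abs] at this
          have hsl : Tendsto (fun s => |φ q s - φ q t| / |s - t|) (𝓝[≠] t)
              (𝓝 |deriv (φ q) t|) := by
            have h1 := (hasDerivAt_iff_tendsto_slope.1 (hp.1 q).hasDerivAt).abs
            apply h1.congr
            intro s
            rw [slope_def_field, abs_div]
          have e3 : ∀ᶠ s in 𝓝[≠] t, m t - ε/2 < |φ q s - φ q t| / |s - t| :=
            hsl.eventually (lt_mem_nhds hqlt)
          filter_upwards [e3, hev] with s hs1 hs2
          refine hs1.le.trans ?_
          rw [hus s hs2.1, hut]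
          have hd : |φ q s - φ q t| ≤ dist (v s) (v t) := abs_dist_sub_le _ _ _
          gcongr
      filter_upwards [hub, e1, e2] with s h1 h2 h3
      rw [Real.dist_eq, abs_lt]
      constructor <;> nlinarith [h1.trans_lt h2]
    have hEx : ∃ L : ℝ, Tendsto (fun s => dist (u s) (u t) / |s - t|) (𝓝[≠] t) (𝓝 L) :=
      ⟨m t, hTm⟩
    have hspeed : metricSpeed u t = m t := by
      rw [metricSpeed, dif_pos hEx]
      exact tendsto_nhds_unique hEx.choose_spec hTm
    -- the squared bound
    have hRT2 : Tendsto (fun s => (dist (u s) (u t) / |s - t|) ^ 2) (𝓝[≠] t)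
        (𝓝 (m t ^ 2)) := hTm.pow 2
    have hub2 : ∀ᶠ s in 𝓝[≠] t, (dist (u s) (u t) / |s - t|) ^ 2
        ≤ (∫ r in t..s, gI r) / (s - t) := by
      filter_upwards [hev] with s hs
      obtain ⟨hsI, hsne⟩ := hs
      rcases lt_or_gt_of_ne hsne with h | h
      · have habs : |s - t| = t - s := by rw [abs_of_neg (by linarith)]; ring
        have hb := hbound s t hsI.1.le h.le ht1.le
        have hgind : ∫ r in s..t, g r = ∫ r in s..t, gI r := by
          rw [intervalIntegral.integral_of_le h.le, intervalIntegral.integral_of_le h.le]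
          apply setIntegral_congr_fun measurableSet_Ioc
          intro r hr
          rw [hgIdef]
          rw [Set.indicator_of_mem (Set.mem_Ioc.2 ⟨hsI.1.trans hr.1, hr.2.trans ht1.le⟩)]
        have hint : (∫ r in t..s, gI r) / (s - t) = (∫ r in s..t, gI r) / (t - s) := by
          rw [intervalIntegral.integral_symm s t, neg_div, ← div_neg, neg_sub]
        rw [habs, hint, ← hgind, div_pow]
        rw [div_le_div_iff₀ (pow_pos (show (0:ℝ) < t - s by linarith) 2) (by linarith)]
        calc dist (u s) (u t) ^ 2 * (t - s) ≤ ((t - s) * ∫ r in s..t, g r) * (t - s) := by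
              nlinarith [sq_nonneg (dist (u s) (u t))]
          _ = (∫ r in s..t, g r) * (t - s) ^ 2 := by ring
      · have habs : |s - t| = s - t := abs_of_pos (by linarith)
        have hb := hbound t s ht0.le h.le hsI.2.le
        have hgind : ∫ r in t..s, g r = ∫ r in t..s, gI r := by
          rw [intervalIntegral.integral_of_le h.le, intervalIntegral.integral_of_le h.le]
          apply setIntegral_congr_fun measurableSet_Ioc
          intro r hr
          rw [hgIdef]
          rw [Set.indicator_of_mem (Set.mem_Ioc.2 ⟨ht0.trans hr.1, hr.2.trans hsI.2.le⟩)]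
        rw [habs, ← hgind, div_pow, dist_comm]
        rw [div_le_div_iff₀ (pow_pos (show (0:ℝ) < s - t by linarith) 2) (by linarith)]
        calc dist (u t) (u s) ^ 2 * (s - t) ≤ ((s - t) * ∫ r in t..s, g r) * (s - t) := by
              nlinarith [sq_nonneg (dist (u t) (u s))]
          _ = (∫ r in t..s, g r) * (s - t) ^ 2 := by ring
    have hgIt : gI t = g t := by
      rw [hgIdef]; exact Set.indicator_of_mem (Set.mem_Ioc.2 ⟨ht0, ht1.le⟩) g
    have hm2 : m t ^ 2 ≤ g t := by
      rw [← hgIt]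
      exact le_of_tendsto_of_tendsto hRT2 h4 hub2
    exact ⟨hEx, by rw [hspeed]; exact hm2, hm2⟩
  -- m is a.e. bounded by sqrt g
  have hne1 : ∀ᵐ r : ℝ, r ≠ (1:ℝ) := by
    have : (volume : Measure ℝ) {(1:ℝ)} = 0 := Real.volume_singleton
    rw [ae_iff]
    simpa [Classical.not_not] using this
  have hmsq : ∀ᵐ r : ℝ, m r ≤ Real.sqrt (g r) := by
    filter_upwards [final, hmP, hne1] with r h1 h2 h3
    by_cases hr : r ∈ Set.Ioo (0:ℝ) 1
    · have := (h1 hr).2.2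
      rw [show m r = |m r| from (abs_of_nonneg (hm0 r)).symm, ← Real.sqrt_sq_eq_abs]
      exact Real.sqrt_le_sqrt this
    · have hf0 : f₀ r = 0 := by
        rw [hf₀def]
        apply Set.indicator_of_notMem
        intro hmem
        rcases Set.mem_Ioc.1 hmem with ⟨ha, hb⟩
        exact hr ⟨ha, lt_of_le_of_ne hb h3⟩
      have := h2.2.1
      rw [hf0] at this
      exact this.trans (Real.sqrt_nonneg _)
  have hsqint : IntegrableOn (fun t => Real.sqrt (g t)) (Set.Icc 0 1) := by
    have hdom : IntegrableOn (fun r => (1 + g r)/2) (Set.Icc 0 1) :=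
      ((integrableOn_const (by simp) (by simp)).add hgint).div_const 2
    refine MeasureTheory.Integrable.mono hdom (Real.continuous_sqrt.comp_aestronglyMeasurable
      hgint.aestronglyMeasurable) ?_
    apply MeasureTheory.ae_of_all
    intro r
    rw [Real.norm_eq_abs, abs_of_nonneg (Real.sqrt_nonneg _), Real.norm_eq_abs]
    refine le_trans ?_ (le_abs_self _)
    nlinarith [Real.sq_sqrt (hg0 r), Real.sqrt_nonneg (g r), sq_nonneg (Real.sqrt (g r) - 1)]
  constructor
  · refine ⟨fun t => Real.sqrt (g t), fun t => Real.sqrt_nonneg _, hsqint, ?_, ?_⟩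
    · have he : (fun t => Real.sqrt (g t) ^ 2) = g := funext fun t => Real.sq_sqrt (hg0 t)
      rw [he]
      exact hgint
    · intro t s ht0 hts hs1
      have h1 : dist (u t) (u s) = dist (v t) (v s) := by
        rw [hvdef]
        simp only
        rw [hcid t ⟨ht0, hts.trans hs1⟩, hcid s ⟨ht0.trans hts, hs1⟩]
      have hsqiv : IntervalIntegrable (fun t => Real.sqrt (g t)) volume t s := by
        rw [intervalIntegrable_iff, Set.uIoc_of_le hts]
        exact hsqint.mono_set ((Set.Ioc_subset_Icc_self).trans (Set.Icc_subset_Icc ht0 hs1))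
      rw [h1]
      refine (hdm t s hts).trans ?_
      exact intervalIntegral.integral_mono_ae hts hm_int.intervalIntegrable hsqiv hmsq
  · rw [ae_restrict_iff' measurableSet_Ioo]
    filter_upwards [final] with t ht hto
    exact ⟨(ht hto).1, (ht hto).2.1⟩
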